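/- If x1 < x2 then x1 + c·T^{(1,x1)} ≤_st x2 + c·T^{(1,x2)}; explicitly, for every u ∈ ℝ, G1(x1, max(0, (u−x1)/c)) ≤ G1(x2, max(0, (u−x2)/c)). -/

import Mathlib

open MeasureTheory Filter Set

/-- Survival function of `T^{(1,x)}`: `G1(x,t) = exp(−∫_0^t φ(x+cv) dv)`. -/
noncomputable def G1 (c : ℝ) (φ : ℝ → ℝ) (x t : ℝ) : ℝ :=
  Real.exp (-∫ v in (0:ℝ)..t, φ (x + c * v))

/-- If `x1 < x2` then `x1 + c T^{(1,x1)} ≤_st x2 + c T^{(1,x2)}`; explicitly, for every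
`u ∈ ℝ`, `G1(x1, max 0 ((u−x1)/c)) ≤ G1(x2, max 0 ((u−x2)/c))`, where
`P(x_i + c T^{(1,x_i)} > u) = G1(x_i, max 0 ((u−x_i)/c))`. -/
theorem shifted_time_stochastic_monotone
    (c α : ℝ) (hc : 0 < c) (hα : 0 < α)
    (φ : ℝ → ℝ) (hφmono : Monotone φ) (hφnonneg : ∀ x, 0 ≤ φ x)
    (hφbot : Tendsto φ atBot (nhds 0)) (hφtop : Tendsto φ atTop atTop)
    (x1 x2 : ℝ) (hx : x1 < x2) :
    ∀ u : ℝ, G1 c φ x1 (max 0 ((u - x1) / c)) ≤ G1 c φ x2 (max 0 ((u - x2) / c)) := by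
  intro u
  have hmono : ∀ x : ℝ, Monotone (fun v => φ (x + c * v)) := fun x =>
    hφmono.comp (fun a b hab => by nlinarith)
  have hint : ∀ x a b : ℝ, IntervalIntegrable (fun v => φ (x + c * v)) volume a b :=
    fun x a b => (hmono x).intervalIntegrable
  unfold G1
  rw [Real.exp_le_exp, neg_le_neg_iff]
  rcases le_or_gt u x2 with h | h
  · have h2 : max 0 ((u - x2) / c) = 0 :=
      max_eq_left (div_nonpos_of_nonpos_of_nonneg (by linarith) hc.le)
    rw [h2, intervalIntegral.integral_same]
    exact intervalIntegral.integral_nonneg (le_max_left _ _) (fun v _ => hφnonneg _)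
  · have h1 : max 0 ((u - x1) / c) = (u - x1) / c :=
      max_eq_right (div_nonneg (by linarith) hc.le)
    have h2 : max 0 ((u - x2) / c) = (u - x2) / c :=
      max_eq_right (div_nonneg (by linarith) hc.le)
    rw [h1, h2]
    set d := (x2 - x1) / c with hd
    have hd0 : 0 ≤ d := div_nonneg (by linarith) hc.le
    have hcd : c * d = x2 - x1 := by
      rw [hd]; field_simp
    have key : (∫ v in (0:ℝ)..(u - x2) / c, φ (x2 + c * v))
        = ∫ v in d..(u - x1) / c, φ (x1 + c * v) := by
      have heq : (∫ v in (0:ℝ)..(u - x2) / c, φ (x2 + c * v))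
          = ∫ v in (0:ℝ)..(u - x2) / c, (fun w => φ (x1 + c * w)) (v + d) := by
        congr 1; funext v; simp only []
        congr 1; rw [mul_add, hcd]; ring
      rw [heq, intervalIntegral.integral_comp_add_right (fun w => φ (x1 + c * w)) d]
      congr 1
      · simp
      · rw [hd]; field_simp; ring
    rw [key]
    have hsplit : (∫ v in (0:ℝ)..(u - x1) / c, φ (x1 + c * v))
        = (∫ v in (0:ℝ)..d, φ (x1 + c * v)) + ∫ v in d..(u - x1) / c, φ (x1 + c * v) :=
      (intervalIntegral.integral_add_adjacent_intervals (hint _ _ _) (hint _ _ _)).symm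
    rw [hsplit]
    have : 0 ≤ ∫ v in (0:ℝ)..d, φ (x1 + c * v) :=
      intervalIntegral.integral_nonneg hd0 (fun v _ => hφnonneg _)
    linarith
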